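/- Let E be a real inner product space, f : E → ℝ continuously differentiable with ‖∇f(x)‖ ≤ 1 for all x ∈ E, let τ > 0, δ ∈ (0,1), d ≥ 0, and let γ : [√τ, (1+δ)√τ] → E be a C¹ curve with constant speed ‖γ'(u)‖ = d/(δ√τ) for all u. Then ∫_{√τ}^{(1+δ)√τ} ( (1/2)‖γ'(u) − 2u·∇f(γ(u))‖² + 2u²(1 − ‖∇f(γ(u))‖²) ) du ≤ d²/(δ√τ) + 10δ·τ^{3/2}. (This estimate on the L-length cost of a constant-speed connecting segment of length d is the core computation in the proof of the triangle inequality, Lemma 2.2.) -/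

import Mathlib

open Set MeasureTheory

/-- The core computation in the proof of the triangle inequality
(Lemma 2.2): the reparametrized L-length of a constant-speed C¹ segment
`γ : [√τ, (1+δ)√τ] → E` with speed `d/(δ√τ)` is at most `d²/(δ√τ) + 10δτ^{3/2}`,
assuming `‖∇f‖ ≤ 1` everywhere. -/
theorem constant_speed_segment_L_length_upper_bound
    {E : Type*} [NormedAddCommGroup E] [InnerProductSpace ℝ E] [CompleteSpace E]
    (f : E → ℝ) (hf : ContDiff ℝ 1 f) (hgrad : ∀ x, ‖gradient f x‖ ≤ 1)
    (τ δ d : ℝ) (hτ : 0 < τ) (hδ : δ ∈ Ioo (0:ℝ) 1) (hd : 0 ≤ d)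
    (γ γ' : ℝ → E)
    (hγ : ∀ u ∈ Icc (Real.sqrt τ) ((1 + δ) * Real.sqrt τ),
      HasDerivWithinAt γ (γ' u) (Icc (Real.sqrt τ) ((1 + δ) * Real.sqrt τ)) u)
    (hγ' : ContinuousOn γ' (Icc (Real.sqrt τ) ((1 + δ) * Real.sqrt τ)))
    (hspeed : ∀ u ∈ Icc (Real.sqrt τ) ((1 + δ) * Real.sqrt τ),
      ‖γ' u‖ = d / (δ * Real.sqrt τ)) :
    (∫ u in (Real.sqrt τ)..((1 + δ) * Real.sqrt τ),
      ((1/2) * ‖γ' u - (2 * u) • gradient f (γ u)‖ ^ 2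
        + 2 * u ^ 2 * (1 - ‖gradient f (γ u)‖ ^ 2)))
      ≤ d ^ 2 / (δ * Real.sqrt τ) + 10 * δ * τ ^ ((3:ℝ)/2) := by
  obtain ⟨hδ0, hδ1⟩ := hδ
  set s := Real.sqrt τ with hs_def
  have hs : 0 < s := Real.sqrt_pos.mpr hτ
  have hab : s ≤ (1 + δ) * s := by nlinarith
  set v := d / (δ * s) with hv_def
  have hδs : 0 < δ * s := by positivity
  have hv0 : 0 ≤ v := div_nonneg hd hδs.le
  have hvd : v * (δ * s) = d := div_mul_cancel₀ d hδs.ne'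
  -- continuity of gradient
  have hgc : Continuous (gradient f) := by
    have h1 : Continuous (fderiv ℝ f) := hf.continuous_fderiv one_ne_zero
    exact ((InnerProductSpace.toDual ℝ E).symm.continuous).comp h1
  have hγc : ContinuousOn γ (Icc s ((1 + δ) * s)) :=
    fun u hu => (hγ u hu).continuousWithinAt
  -- integrability of LHS integrand
  have hcontLHS : ContinuousOn (fun u => (1/2) * ‖γ' u - (2 * u) • gradient f (γ u)‖ ^ 2
      + 2 * u ^ 2 * (1 - ‖gradient f (γ u)‖ ^ 2)) (Icc s ((1 + δ) * s)) := by
    have hg : ContinuousOn (fun u => gradient f (γ u)) (Icc s ((1 + δ) * s)) :=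
      hgc.comp_continuousOn hγc
    have h2u : ContinuousOn (fun u : ℝ => (2 * u) • gradient f (γ u))
        (Icc s ((1 + δ) * s)) :=
      ContinuousOn.smul (by fun_prop) hg
    have hsub : ContinuousOn (fun u => γ' u - (2 * u) • gradient f (γ u))
        (Icc s ((1 + δ) * s)) := hγ'.sub h2u
    exact (continuousOn_const.mul (hsub.norm.pow 2)).add
      ((by fun_prop : ContinuousOn (fun u : ℝ => 2 * u ^ 2) (Icc s ((1 + δ) * s))).mul
        (continuousOn_const.sub (hg.norm.pow 2)))
  have hint1 : IntervalIntegrable (fun u => (1/2) * ‖γ' u - (2 * u) • gradient f (γ u)‖ ^ 2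
      + 2 * u ^ 2 * (1 - ‖gradient f (γ u)‖ ^ 2)) volume s ((1 + δ) * s) := by
    apply ContinuousOn.intervalIntegrable
    rwa [Set.uIcc_of_le hab]
  have hint2 : IntervalIntegrable (fun u => (1/2) * v ^ 2 + 2 * u * v + 2 * u ^ 2)
      volume s ((1 + δ) * s) := by
    apply Continuous.intervalIntegrable; fun_prop
  -- pointwise bound
  have hpt : ∀ u ∈ Icc s ((1 + δ) * s),
      (1/2) * ‖γ' u - (2 * u) • gradient f (γ u)‖ ^ 2
        + 2 * u ^ 2 * (1 - ‖gradient f (γ u)‖ ^ 2)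
      ≤ (1/2) * v ^ 2 + 2 * u * v + 2 * u ^ 2 := by
    intro u hu
    have hu0 : 0 < u := lt_of_lt_of_le hs hu.1
    set g := gradient f (γ u) with hg_def
    have hg1 : ‖g‖ ≤ 1 := hgrad _
    have hγu : ‖γ' u‖ = v := hspeed u hu
    have hexp : ‖γ' u - (2 * u) • g‖ ^ 2
        = ‖γ' u‖ ^ 2 - 2 * ((2 * u) * inner ℝ (γ' u) g) + (|2 * u| * ‖g‖) ^ 2 := by
      rw [norm_sub_sq_real, real_inner_smul_right, norm_smul, Real.norm_eq_abs]
    have habs : |(inner ℝ (γ' u) g : ℝ)| ≤ ‖γ' u‖ * ‖g‖ := abs_real_inner_le_norm _ _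
    have hlow : -(v * ‖g‖) ≤ (inner ℝ (γ' u) g : ℝ) := by
      rw [hγu] at habs
      linarith [(abs_le.mp habs).1]
    have h2u : |2 * u| = 2 * u := abs_of_pos (by linarith)
    rw [hexp, h2u, hγu]
    have hgn : 0 ≤ ‖g‖ := norm_nonneg _
    nlinarith [mul_le_mul_of_nonneg_left hg1 (by positivity : (0:ℝ) ≤ 2 * u * v),
      mul_le_mul_of_nonneg_left hlow (by positivity : (0:ℝ) ≤ 2 * (2 * u)),
      sq_nonneg (‖g‖ - 1), sq_nonneg u, mul_pos hu0 hu0]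
  have hmono := intervalIntegral.integral_mono_on hab hint1 hint2 hpt
  -- compute RHS integral
  have hRHS : (∫ u in s..((1 + δ) * s), ((1/2) * v ^ 2 + 2 * u * v + 2 * u ^ 2))
      = ((1/2) * v ^ 2 * ((1 + δ) * s) + v * ((1 + δ) * s) ^ 2 + (2/3) * ((1 + δ) * s) ^ 3)
        - ((1/2) * v ^ 2 * s + v * s ^ 2 + (2/3) * s ^ 3) := by
    have hderiv : ∀ u ∈ Set.uIcc s ((1 + δ) * s),
        HasDerivAt (fun u => (1/2) * v ^ 2 * u + v * u ^ 2 + (2/3) * u ^ 3)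
          ((1/2) * v ^ 2 + 2 * u * v + 2 * u ^ 2) u := by
      intro u _
      have h1 : HasDerivAt (fun u : ℝ => (1/2) * v ^ 2 * u + v * u ^ 2 + (2/3) * u ^ 3)
          ((1/2) * v ^ 2 * 1 + v * (2 * u) + (2/3) * (3 * u ^ 2)) u := by
        apply HasDerivAt.add
        apply HasDerivAt.add
        · exact (hasDerivAt_id u).const_mul _
        · simpa using ((hasDerivAt_pow 2 u)).const_mul v
        · simpa using ((hasDerivAt_pow 3 u)).const_mul (2/3 : ℝ)
      convert h1 using 1; ring
    exact intervalIntegral.integral_eq_sub_of_hasDerivAt hderiv hint2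
  have hτ32 : τ ^ ((3:ℝ)/2) = s ^ 3 := by
    rw [show ((3:ℝ)/2) = (1/2) * (3:ℕ) by norm_num, Real.rpow_mul hτ.le,
      Real.rpow_natCast, ← Real.sqrt_eq_rpow]
  rw [hτ32]
  have key : ((1/2) * v ^ 2 * ((1 + δ) * s) + v * ((1 + δ) * s) ^ 2 + (2/3) * ((1 + δ) * s) ^ 3)
        - ((1/2) * v ^ 2 * s + v * s ^ 2 + (2/3) * s ^ 3)
      ≤ d ^ 2 / (δ * s) + 10 * δ * s ^ 3 := by
    have hd2 : d ^ 2 / (δ * s) = v ^ 2 * (δ * s) := by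
      rw [hv_def]; field_simp
    rw [hd2]
    nlinarith [sq_nonneg (v - s * (2 + δ)), mul_pos hδ0 hs, sq_nonneg s, sq_nonneg v,
      mul_nonneg (mul_nonneg hδ0.le hs.le) (sq_nonneg (v - s * (2 + δ))),
      mul_nonneg (mul_nonneg (mul_nonneg hδ0.le hδ0.le) hs.le) (sq_nonneg s),
      mul_nonneg (mul_nonneg (mul_nonneg hδ0.le hs.le) hs.le) hs.le]
  calc _ ≤ _ := hmono
    _ ≤ _ := by rw [hRHS] at *; exact key
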